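/- arXiv:1309.4882 — 2 statements merged into one kernel-verified Lean document; each statement's English description precedes it below -/
import Mathlib

section
/- There exists an absolute constant C > 0 such that for every real b > 0 and every δ ∈ (0,1], there exists a real polynomial r of degree at most C·√(max{b, log(1/δ)} · log(1/δ)) satisfying sup_{x ∈ [0,b]} |e^{-x} - r(x)| ≤ δ. -/
open Polynomial Finset

lemma natDegree_T_le_nat : ∀ n : ℕ, (Polynomial.Chebyshev.T ℝ (n : ℤ)).natDegree ≤ n := by
  intro n
  induction n using Nat.strong_induction_on with
  | _ n ih =>
    match n with
    | 0 => simp [Polynomial.Chebyshev.T_zero]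
    | 1 => simpa [Polynomial.Chebyshev.T_one] using natDegree_X_le
    | (m+2) =>
      have h := Polynomial.Chebyshev.T_add_two ℝ (m : ℤ)
      have hc : ((m:ℤ) + 2) = ((m+2 : ℕ) : ℤ) := by push_cast; ring
      rw [hc] at h
      rw [h]
      refine (natDegree_sub_le _ _).trans (max_le ?_ ?_)
      · refine (natDegree_mul_le).trans ?_
        have h1 : ((m:ℤ) + 1) = ((m+1 : ℕ) : ℤ) := by push_cast; ring
        rw [h1]
        have := ih (m+1) (by omega)
        have h2 : (2 * X : ℝ[X]).natDegree ≤ 1 := by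
          refine natDegree_mul_le.trans ?_
          simp
        omega
      · exact (ih m (by omega)).trans (by omega)

lemma natDegree_T_le (n : ℤ) : (Polynomial.Chebyshev.T ℝ n).natDegree ≤ n.natAbs := by
  rcases Int.natAbs_eq n with h | h
  · rw [h]; exact natDegree_T_le_nat _
  · have := natDegree_T_le_nat n.natAbs
    rwa [← Polynomial.Chebyshev.T_neg, ← h] at this

lemma cos_pow (θ : ℝ) : ∀ s : ℕ, (2:ℝ)^s * (Real.cos θ)^s
    = ∑ k ∈ Finset.range (s+1), (s.choose k : ℝ) * Real.cos (((s:ℝ) - 2*k) * θ) := by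
  intro s
  induction s with
  | zero => simp
  | succ s ih =>
    have key : ∑ k ∈ Finset.range (s+2), ((s+1).choose k : ℝ) * Real.cos (((s:ℝ)+1 - 2*k) * θ)
        = ∑ k ∈ Finset.range (s+1), (s.choose k : ℝ) *
            (Real.cos ((((s:ℝ) - 2*k) + 1) * θ) + Real.cos ((((s:ℝ) - 2*k) - 1) * θ)) := by
      have B : ∑ k ∈ Finset.range (s+1), (s.choose k : ℝ) * Real.cos ((((s:ℝ) - 2*k) + 1) * θ)
          = ∑ k ∈ Finset.range (s+1), (s.choose (k+1) : ℝ) * Real.cos (((s:ℝ)+1 - 2*((k:ℝ)+1)) * θ)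
            + Real.cos (((s:ℝ)+1) * θ) := by
        have ext : ∑ k ∈ Finset.range (s+1), (s.choose k : ℝ) * Real.cos ((((s:ℝ) - 2*k) + 1) * θ)
            = ∑ k ∈ Finset.range (s+2), (s.choose k : ℝ) * Real.cos ((((s:ℝ) - 2*k) + 1) * θ) := by
          symm
          rw [Finset.sum_range_succ]
          simp [Nat.choose_succ_self]
        rw [ext, Finset.sum_range_succ' _ (s+1)]
        congr 1
        · apply Finset.sum_congr rfl
          intro k _
          push_cast
          have harg : ((s:ℝ) - 2*((k:ℝ)+1) + 1) * θ = ((s:ℝ)+1 - 2*((k:ℝ)+1)) * θ := by ring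
          rw [harg]
        · norm_num
      rw [Finset.sum_range_succ' _ (s+1)]
      have e1 : ∀ k ∈ Finset.range (s+1),
          (((s+1).choose (k+1) : ℝ)) * Real.cos (((s:ℝ)+1 - 2*((k:ℕ)+1:ℕ)) * θ)
          = (s.choose k : ℝ) * Real.cos ((((s:ℝ) - 2*k) - 1) * θ)
            + (s.choose (k+1) : ℝ) * Real.cos (((s:ℝ)+1 - 2*((k:ℝ)+1)) * θ) := by
        intro k _
        rw [Nat.choose_succ_succ]
        push_cast
        have harg : ((s:ℝ)+1 - 2*((k:ℝ)+1)) * θ = (((s:ℝ) - 2*(k:ℝ)) - 1) * θ := by ring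
        rw [harg]; ring
      rw [Finset.sum_congr rfl e1, Finset.sum_add_distrib]
      simp only [Nat.choose_zero_right, Nat.cast_one, Nat.cast_zero]
      rw [add_assoc]
      have hz : ((s:ℝ) + 1 - 2 * 0) * θ = ((s:ℝ)+1) * θ := by ring
      rw [hz, one_mul, ← B, ← Finset.sum_add_distrib]
      apply Finset.sum_congr rfl
      intro k _
      ring
    have cast1 : ∑ k ∈ Finset.range (s+1+1), ((s+1).choose k : ℝ) * Real.cos ((((s+1:ℕ):ℝ) - 2*k) * θ)
        = ∑ k ∈ Finset.range (s+2), ((s+1).choose k : ℝ) * Real.cos (((s:ℝ)+1 - 2*k) * θ) := by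
      apply Finset.sum_congr rfl
      intro k _
      push_cast
      ring_nf
    rw [cast1, key]
    rw [pow_succ, pow_succ]
    rw [show (2:ℝ)^s * 2 * ((Real.cos θ)^s * Real.cos θ) = (2 * Real.cos θ) * ((2:ℝ)^s * (Real.cos θ)^s) by ring]
    rw [ih, Finset.mul_sum]
    apply Finset.sum_congr rfl
    intro k _
    have h2 : 2 * Real.cos θ * Real.cos (((s:ℝ) - 2*k) * θ)
        = Real.cos ((((s:ℝ) - 2*k) + 1) * θ) + Real.cos ((((s:ℝ) - 2*k) - 1) * θ) := by
      have ea : (((s:ℝ) - 2*k) + 1) * θ = ((s:ℝ) - 2*k) * θ + θ := by ring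
      have eb : (((s:ℝ) - 2*k) - 1) * θ = ((s:ℝ) - 2*k) * θ - θ := by ring
      rw [ea, eb, Real.cos_add, Real.cos_sub]
      ring
    rw [show (2:ℝ) * Real.cos θ * ((s.choose k:ℝ) * Real.cos (((s:ℝ) - 2*k) * θ))
        = (s.choose k:ℝ) * (2 * Real.cos θ * Real.cos (((s:ℝ) - 2*k) * θ)) by ring, h2]

lemma binom_exp_neg (s : ℕ) (t : ℝ) :
    ∑ k ∈ Finset.range (s+1), (s.choose k : ℝ) * Real.exp (t * (2*k - (s:ℝ)))
      = (Real.exp t + Real.exp (-t))^s := by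
  rw [add_pow]
  apply Finset.sum_congr rfl
  intro k hk
  have hk' : k ≤ s := by simpa using Nat.lt_succ_iff.mp (Finset.mem_range.mp hk)
  rw [← Real.exp_nat_mul, ← Real.exp_nat_mul, ← Real.exp_add]
  rw [Nat.cast_sub hk']
  ring_nf

lemma binom_exp_pos (s : ℕ) (t : ℝ) :
    ∑ k ∈ Finset.range (s+1), (s.choose k : ℝ) * Real.exp (t * ((s:ℝ) - 2*k))
      = (Real.exp t + Real.exp (-t))^s := by
  have h := binom_exp_neg s (-t)
  rw [neg_neg] at h
  rw [show Real.exp (-t) + Real.exp t = Real.exp t + Real.exp (-t) from add_comm _ _] at h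
  rw [← h]
  apply Finset.sum_congr rfl
  intro k _
  congr 1
  ring

lemma chernoff_side (s S d : ℕ) (hsS : s ≤ S) (hS : 0 < S) (g : ℕ → ℝ)
    (hg : ∀ t : ℝ, ∑ k ∈ Finset.range (s+1), (s.choose k : ℝ) * Real.exp (t * g k)
      = (Real.exp t + Real.exp (-t))^s) :
    ∑ k ∈ (Finset.range (s+1)).filter (fun k => (d:ℝ) ≤ g k), (s.choose k : ℝ)
      ≤ 2^s * Real.exp (-(d:ℝ)^2/(2*(S:ℝ))) := by
  set t : ℝ := (d:ℝ)/(S:ℝ) with ht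
  have hSpos : (0:ℝ) < S := by exact_mod_cast hS
  have htpos : 0 ≤ t := by positivity
  have key : Real.exp (t * d) * ∑ k ∈ (Finset.range (s+1)).filter (fun k => (d:ℝ) ≤ g k), (s.choose k : ℝ)
      ≤ (Real.exp t + Real.exp (-t))^s := by
    rw [← hg t, Finset.mul_sum]
    refine le_trans (Finset.sum_le_sum ?_) (Finset.sum_le_sum_of_subset_of_nonneg
      (Finset.filter_subset _ _) ?_)
    · intro k hk
      have hgk := (Finset.mem_filter.mp hk).2
      rw [mul_comm (Real.exp (t*d)) _]
      refine mul_le_mul_of_nonneg_left ?_ (by positivity)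
      exact Real.exp_le_exp.mpr (mul_le_mul_of_nonneg_left hgk htpos)
    · intro k _ _
      positivity
  have hch : (Real.exp t + Real.exp (-t))^s ≤ 2^s * Real.exp ((S:ℝ) * t^2/2) := by
    have h1 : Real.exp t + Real.exp (-t) = 2 * Real.cosh t := by
      rw [Real.cosh_eq]; ring
    rw [h1]
    calc (2 * Real.cosh t)^s ≤ (2 * Real.exp (t^2/2))^s := by
          apply pow_le_pow_left₀ (by positivity)
          have := Real.cosh_le_exp_half_sq t
          linarith
      _ = 2^s * Real.exp (t^2/2)^s := by rw [mul_pow]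
      _ = 2^s * Real.exp ((s:ℝ) * (t^2/2)) := by rw [Real.exp_nat_mul]
      _ ≤ 2^s * Real.exp ((S:ℝ) * t^2/2) := by
          apply mul_le_mul_of_nonneg_left _ (by positivity)
          apply Real.exp_le_exp.mpr
          have hsS' : (s:ℝ) ≤ (S:ℝ) := by exact_mod_cast hsS
          nlinarith [sq_nonneg t]
  have hfinal : Real.exp ((S:ℝ) * t^2/2) / Real.exp (t * d) = Real.exp (-(d:ℝ)^2/(2*(S:ℝ))) := by
    rw [← Real.exp_sub]
    congr 1
    rw [ht]
    field_simp
    ring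
  have hpos := Real.exp_pos (t * d)
  have hX : (∑ k ∈ (Finset.range (s+1)).filter (fun k => (d:ℝ) ≤ g k), (s.choose k : ℝ)) * Real.exp (t*d)
      ≤ 2^s * Real.exp ((S:ℝ) * t^2/2) := by
    calc (∑ k ∈ (Finset.range (s+1)).filter (fun k => (d:ℝ) ≤ g k), (s.choose k : ℝ)) * Real.exp (t*d)
        = Real.exp (t*d) * ∑ k ∈ (Finset.range (s+1)).filter (fun k => (d:ℝ) ≤ g k), (s.choose k : ℝ) := by ring
      _ ≤ (Real.exp t + Real.exp (-t))^s := key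
      _ ≤ 2^s * Real.exp ((S:ℝ) * t^2/2) := hch
  calc (∑ k ∈ (Finset.range (s+1)).filter (fun k => (d:ℝ) ≤ g k), (s.choose k : ℝ))
      ≤ 2^s * Real.exp ((S:ℝ) * t^2/2) / Real.exp (t*d) := (le_div_iff₀ hpos).mpr hX
    _ = 2^s * Real.exp (-(d:ℝ)^2/(2*(S:ℝ))) := by rw [mul_div_assoc, hfinal]

lemma chernoff (s S d : ℕ) (hsS : s ≤ S) (hS : 0 < S) :
    ∑ k ∈ (Finset.range (s+1)).filter (fun k : ℕ => d < ((s:ℤ) - 2*(k:ℤ)).natAbs), (s.choose k : ℝ)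
      ≤ 2^s * (2 * Real.exp (-(d:ℝ)^2/(2*(S:ℝ)))) := by
  set P : ℕ → Prop := fun k => (d:ℝ) ≤ (s:ℝ) - 2*k with hP
  classical
  have split := Finset.sum_filter_add_sum_filter_not
    ((Finset.range (s+1)).filter (fun k : ℕ => d < ((s:ℤ) - 2*(k:ℤ)).natAbs)) P (fun k => (s.choose k : ℝ))
  have hA : ∑ k ∈ ((Finset.range (s+1)).filter (fun k : ℕ => d < ((s:ℤ) - 2*(k:ℤ)).natAbs)).filter P,
      (s.choose k : ℝ) ≤ 2^s * Real.exp (-(d:ℝ)^2/(2*(S:ℝ))) := by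
    refine le_trans (Finset.sum_le_sum_of_subset_of_nonneg ?_ (by intros; positivity))
      (chernoff_side s S d hsS hS (fun k => (s:ℝ) - 2*k) (fun t => binom_exp_pos s t))
    intro k hk
    simp only [Finset.mem_filter, Finset.mem_range] at hk ⊢
    exact ⟨hk.1.1, hk.2⟩
  have hB : ∑ k ∈ ((Finset.range (s+1)).filter (fun k : ℕ => d < ((s:ℤ) - 2*(k:ℤ)).natAbs)).filter (fun k => ¬ P k),
      (s.choose k : ℝ) ≤ 2^s * Real.exp (-(d:ℝ)^2/(2*(S:ℝ))) := by
    refine le_trans (Finset.sum_le_sum_of_subset_of_nonneg ?_ (by intros; positivity))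
      (chernoff_side s S d hsS hS (fun k => 2*k - (s:ℝ)) (fun t => binom_exp_neg s t))
    intro k hk
    simp only [Finset.mem_filter, Finset.mem_range] at hk ⊢
    refine ⟨hk.1.1, ?_⟩
    have h1 : d < ((s:ℤ) - 2*(k:ℤ)).natAbs := hk.1.2
    have h2 : ¬ ((d:ℝ) ≤ (s:ℝ) - 2*k) := hk.2
    push_neg at h2
    -- from h1 : d < |s - 2k| (ℤ), and s - 2k < d (ℝ ⇒ ℤ), get 2k - s ≥ d+1 > d
    have h3 : ((s:ℤ) - 2*k) < d := by
      have : ((s:ℤ) - 2*k : ℤ) < (d:ℤ) ↔ ((s:ℝ) - 2*k < (d:ℝ)) := by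
        constructor
        · intro h; push_cast at h ⊢; exact_mod_cast h
        · intro h
          have := h
          push_cast at this
          exact_mod_cast this
      exact this.mpr h2
    have h4 : (d:ℤ) < 2*k - s := by omega
    have : ((d:ℝ)) < 2*(k:ℝ) - (s:ℝ) := by exact_mod_cast h4
    linarith
  linarith [split, hA, hB]

lemma pow_div_factorial_le (l : ℝ) (hl : 0 ≤ l) (S₀ : ℕ) (hS₀ : 2*l ≤ S₀) (m : ℕ) :
    l^(S₀+m)/(Nat.factorial (S₀+m) : ℝ) ≤ Real.exp l * (2:ℝ)⁻¹^m := by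
  induction m with
  | zero =>
    simp only [Nat.add_zero, pow_zero, mul_one]
    have h1 : l^S₀/(Nat.factorial S₀ : ℝ) ≤ ∑ i ∈ Finset.range (S₀+1), l^i/(Nat.factorial i : ℝ) := by
      refine Finset.single_le_sum (f := fun i => l^i/(Nat.factorial i : ℝ)) ?_ (Finset.self_mem_range_succ S₀)
      intro i _
      positivity
    exact h1.trans (Real.sum_le_exp_of_nonneg hl _)
  | succ m ih =>
    have hfac : (Nat.factorial (S₀+(m+1)) : ℝ) = (Nat.factorial (S₀+m) : ℝ) * ((S₀+m+1 : ℕ) : ℝ) := by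
      rw [show S₀+(m+1) = (S₀+m)+1 by ring]
      rw [Nat.factorial_succ]
      push_cast
      ring
    have hstep : l^(S₀+(m+1))/(Nat.factorial (S₀+(m+1)) : ℝ) = (l^(S₀+m)/(Nat.factorial (S₀+m) : ℝ)) * (l/((S₀+m+1:ℕ):ℝ)) := by
      rw [hfac, show S₀+(m+1) = (S₀+m)+1 by ring, pow_succ]
      have : (Nat.factorial (S₀+m) : ℝ) ≠ 0 := by positivity
      have h2 : ((S₀+m+1:ℕ):ℝ) ≠ 0 := by positivity
      field_simp
    rw [hstep]
    have hhalf : l/((S₀+m+1:ℕ):ℝ) ≤ 2⁻¹ := by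
      rw [div_le_iff₀ (by positivity)]
      push_cast
      nlinarith
    have hnn : (0:ℝ) ≤ l^(S₀+m)/(Nat.factorial (S₀+m) : ℝ) := by positivity
    calc (l^(S₀+m)/(Nat.factorial (S₀+m) : ℝ)) * (l/((S₀+m+1:ℕ):ℝ))
        ≤ (Real.exp l * (2:ℝ)⁻¹^m) * 2⁻¹ := by
          apply mul_le_mul ih hhalf (by positivity)
          positivity
      _ = Real.exp l * (2:ℝ)⁻¹^(m+1) := by rw [pow_succ]; ring

set_option maxHeartbeats 1000000 in

/-- There is a polynomial of degree `O(√(max{b, log(1/δ)}·log(1/δ)))` that `δ`-approximates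
`e^{-x}` uniformly on `[0, b]`. -/
theorem exp_poly_approx_upper_bound :
    ∃ C : ℝ, 0 < C ∧ ∀ b : ℝ, 0 < b → ∀ δ : ℝ, δ ∈ Set.Ioc (0 : ℝ) 1 →
      ∃ r : Polynomial ℝ,
        (r.natDegree : ℝ) ≤
          C * Real.sqrt (max b (Real.log (1 / δ)) * Real.log (1 / δ)) ∧
        ∀ x ∈ Set.Icc (0 : ℝ) b, |Real.exp (-x) - r.eval x| ≤ δ := by
  refine ⟨100, by norm_num, ?_⟩
  intro b hb δ hδ
  obtain ⟨hδ0, hδ1⟩ := hδ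
  set L := Real.log (1/δ) with hLdef
  have hL0 : 0 ≤ L := Real.log_nonneg (by rw [le_div_iff₀ hδ0]; linarith)
  by_cases hhalf : 1/2 < δ
  · -- constant polynomial 1/2 suffices
    refine ⟨Polynomial.C (1/2), ?_, ?_⟩
    · rw [Polynomial.natDegree_C]
      push_cast
      positivity
    · intro x hx
      have h1 : Real.exp (-x) ≤ 1 := Real.exp_le_one_iff.mpr (by linarith [hx.1])
      have h2 : 0 < Real.exp (-x) := Real.exp_pos _
      rw [Polynomial.eval_C, abs_le]
      constructor <;> linarith
  · push_neg at hhalf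
    have hL : Real.log 2 ≤ L := by
      apply Real.log_le_log (by norm_num)
      rw [le_div_iff₀ hδ0]; linarith
    have hlog2 : (0.6931471803:ℝ) < Real.log 2 := Real.log_two_gt_d9
    have hlog2' : Real.log 2 < 0.6931471808 := Real.log_two_lt_d9
    have hLhalf : (1/2:ℝ) ≤ L := by linarith
    have hδL : Real.exp (-L) = δ := by
      rw [hLdef, Real.exp_neg, Real.exp_log (by positivity), one_div, inv_inv]
    set l : ℝ := b/2 with hl_def
    have hl0 : 0 ≤ l := by positivity
    set S₀ : ℕ := ⌈b⌉₊ with hS₀def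
    set c : ℕ := ⌈2*L⌉₊ + 2 with hcdef
    set S : ℕ := S₀ + c with hSdef
    have hSpos : 0 < S := by omega
    have hS₀b : 2*l ≤ (S₀:ℝ) := by
      rw [hl_def]
      have := Nat.le_ceil b
      push_cast at this ⊢
      linarith
    set d : ℕ := ⌈Real.sqrt (2*(S:ℝ)*(L+2))⌉₊ with hddef
    have hdlow : Real.sqrt (2*(S:ℝ)*(L+2)) ≤ (d:ℝ) := Nat.le_ceil _
    have hd2 : (L+2) ≤ (d:ℝ)^2/(2*(S:ℝ)) := by
      have hSr : (0:ℝ) < (S:ℝ) := by exact_mod_cast hSpos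
      have h1 : 2*(S:ℝ)*(L+2) ≤ (d:ℝ)^2 := by
        have := Real.sq_sqrt (by positivity : (0:ℝ) ≤ 2*(S:ℝ)*(L+2))
        nlinarith [hdlow, Real.sqrt_nonneg (2*(S:ℝ)*(L+2))]
      rw [le_div_iff₀ (by positivity)]
      linarith
    -- the polynomial
    set good : ℕ → Finset ℕ :=
      fun s => (Finset.range (s+1)).filter (fun k : ℕ => ((s:ℤ) - 2*(k:ℤ)).natAbs ≤ d) with hgood
    set coeffc : ℕ → ℝ := fun s => Real.exp (-l) * (-l)^s / (Nat.factorial s : ℝ) with hcoeffc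
    set q : ℝ[X] := ∑ s ∈ Finset.range (S+1), (coeffc s * (2:ℝ)⁻¹^s) •
        ∑ k ∈ good s, ((s.choose k : ℝ)) • Polynomial.Chebyshev.T ℝ ((s:ℤ) - 2*(k:ℤ)) with hqdef
    set lin : ℝ[X] := Polynomial.C (2/b) * Polynomial.X + Polynomial.C (-1) with hlin
    refine ⟨q.comp lin, ?_, ?_⟩
    · -- degree bound
      have hq : q.natDegree ≤ d := by
        rw [hqdef]
        apply Polynomial.natDegree_sum_le_of_forall_le
        intro s _
        refine (Polynomial.natDegree_smul_le _ _).trans ?_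
        apply Polynomial.natDegree_sum_le_of_forall_le
        intro k hk
        refine (Polynomial.natDegree_smul_le _ _).trans ?_
        refine (natDegree_T_le _).trans ?_
        rw [hgood] at hk
        exact (Finset.mem_filter.mp hk).2
      have hlin1 : lin.natDegree ≤ 1 := by
        rw [hlin]
        exact Polynomial.natDegree_linear_le
      have hdeg : (q.comp lin).natDegree ≤ d := by
        refine (Polynomial.natDegree_comp_le).trans ?_
        calc q.natDegree * lin.natDegree ≤ d * 1 := Nat.mul_le_mul hq hlin1
          _ = d := by omega
      -- now the real arithmetic
      set M : ℝ := max b L with hM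
      have hbM : b ≤ M := le_max_left _ _
      have hLM : L ≤ M := le_max_right _ _
      have hM0 : (0:ℝ) ≤ M := le_trans hL0 hLM
      have hd1 : (d:ℝ) ≤ Real.sqrt (2*(S:ℝ)*(L+2)) + 1 :=
        (Nat.ceil_lt_add_one (by positivity)).le
      have hS_le : (S:ℝ) ≤ b + 2*L + 4 := by
        have h1 : (S₀:ℝ) ≤ b + 1 := (Nat.ceil_lt_add_one hb.le).le
        have h2 : ((⌈2*L⌉₊:ℕ):ℝ) ≤ 2*L + 1 := (Nat.ceil_lt_add_one (by positivity)).le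
        rw [hSdef, hcdef]
        push_cast
        linarith
      have h2S : 2*(S:ℝ)*(L+2) ≤ 121*(M*L) := by
        have hA : (S:ℝ) ≤ 11*M := by linarith
        have hB : L+2 ≤ 5*L := by linarith
        have hC : (0:ℝ) ≤ (S:ℝ) := by positivity
        nlinarith
      have hsq : Real.sqrt (2*(S:ℝ)*(L+2)) ≤ 11*Real.sqrt (M*L) := by
        calc Real.sqrt (2*(S:ℝ)*(L+2)) ≤ Real.sqrt (121*(M*L)) := Real.sqrt_le_sqrt h2S
          _ = 11*Real.sqrt (M*L) := by
              rw [show (121:ℝ)*(M*L) = 11^2*(M*L) by norm_num,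
                Real.sqrt_mul (by positivity), Real.sqrt_sq (by norm_num)]
      have hLsq : L ≤ Real.sqrt (M*L) := by
        calc L = Real.sqrt (L*L) := by rw [Real.sqrt_mul_self hL0]
          _ ≤ Real.sqrt (M*L) := Real.sqrt_le_sqrt (mul_le_mul_of_nonneg_right hLM hL0)
      have hdeg' : ((q.comp lin).natDegree : ℝ) ≤ (d:ℝ) := by exact_mod_cast hdeg
      calc ((q.comp lin).natDegree : ℝ) ≤ (d:ℝ) := hdeg'
        _ ≤ Real.sqrt (2*(S:ℝ)*(L+2)) + 1 := hd1
        _ ≤ 11*Real.sqrt (M*L) + 2*L := by linarith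
        _ ≤ 11*Real.sqrt (M*L) + 2*Real.sqrt (M*L) := by linarith
        _ ≤ 100 * Real.sqrt (M*L) := by
            nlinarith [Real.sqrt_nonneg (M*L)]
    · -- approximation bound
      intro x hx
      obtain ⟨hx0, hxb⟩ := hx
      set y : ℝ := 2*x/b - 1 with hydef
      have hy1 : -1 ≤ y := by
        rw [hydef]
        have : (0:ℝ) ≤ 2*x/b := by positivity
        linarith
      have hy2 : y ≤ 1 := by
        rw [hydef]
        have : 2*x/b ≤ 2 := by
          rw [div_le_iff₀ hb]; linarith
        linarith
      set θ : ℝ := Real.arccos y with hθ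
      have hcos : Real.cos θ = y := Real.cos_arccos hy1 hy2
      have habs_y : |y| ≤ 1 := abs_le.mpr ⟨hy1, hy2⟩
      have hx_eq : -x = -l - l*y := by
        rw [hl_def, hydef]
        field_simp
        ring
      -- evaluation
      have heval : (q.comp lin).eval x = ∑ s ∈ Finset.range (S+1), (coeffc s * (2:ℝ)⁻¹^s) *
          ∑ k ∈ good s, (s.choose k : ℝ) * Real.cos (((s:ℝ) - 2*(k:ℝ)) * θ) := by
        have hlin_eval : lin.eval x = y := by
          rw [hlin, hydef]
          simp only [Polynomial.eval_add, Polynomial.eval_mul, Polynomial.eval_C, Polynomial.eval_X]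
          ring
        rw [Polynomial.eval_comp, hlin_eval, hqdef, Polynomial.eval_finset_sum]
        apply Finset.sum_congr rfl
        intro s _
        rw [Polynomial.eval_smul, Polynomial.eval_finset_sum, smul_eq_mul]
        congr 1
        apply Finset.sum_congr rfl
        intro k _
        rw [Polynomial.eval_smul, smul_eq_mul, ← hcos, Polynomial.Chebyshev.T_real_cos]
        congr 2
        push_cast
        ring
      -- the series
      set F : ℕ → ℝ := fun s => coeffc s * y^s with hF
      have hFalt : ∀ s, F s = Real.exp (-l) * ((-(l*y))^s / (Nat.factorial s : ℝ)) := by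
        intro s
        rw [hF, hcoeffc]
        simp only
        rw [show (-(l*y)) = (-l)*y by ring, mul_pow]
        ring
      have hhs : HasSum (fun s : ℕ => (-(l*y))^s / (Nat.factorial s : ℝ)) (Real.exp (-(l*y))) := by
        have h := NormedSpace.expSeries_div_hasSum_exp (-(l*y))
        rwa [← Real.exp_eq_exp_ℝ] at h
      have hFsum : HasSum F (Real.exp (-x)) := by
        have h2 := hhs.mul_left (Real.exp (-l))
        rw [← Real.exp_add] at h2
        rw [hx_eq, show -l + -(l*y) = -l - l*y by ring] at *
        exact (funext hFalt : F = _) ▸ h2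
      have hsummable : Summable F := hFsum.summable
      have hsplit : Real.exp (-x) = (∑ s ∈ Finset.range (S+1), F s) + ∑' s, F (s + (S+1)) := by
        rw [← hFsum.tsum_eq]
        exact (Summable.sum_add_tsum_nat_add (S+1) hsummable).symm
      -- tail bound
      have hcl : ∀ n : ℕ, |F n| ≤ Real.exp (-l) * l^n / (Nat.factorial n : ℝ) := by
        intro n
        rw [hFalt n, abs_mul, abs_of_pos (Real.exp_pos _), abs_div, abs_pow, abs_neg, abs_mul,
          abs_of_nonneg hl0, Nat.abs_cast]
        rw [mul_div_assoc]
        apply mul_le_mul_of_nonneg_left _ (Real.exp_pos (-l)).le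
        apply div_le_div_of_nonneg_right _ (by positivity)
        · calc (l*|y|)^n ≤ (l*1)^n := by
                apply pow_le_pow_left₀ (by positivity)
                nlinarith [abs_nonneg y]
            _ = l^n := by ring_nf
      -- tail bound vs geometric
      have htb : ∀ s : ℕ, |F (s + (S+1))| ≤ (2:ℝ)⁻¹^(s+(c+1)) := by
        intro s
        refine (hcl _).trans ?_
        have harr : s + (S+1) = S₀ + (s + (c+1)) := by omega
        rw [harr]
        have h1 := pow_div_factorial_le l hl0 S₀ hS₀b (s + (c+1))
        have h2 : Real.exp (-l) * (l^(S₀+(s+(c+1)))/(Nat.factorial (S₀+(s+(c+1))) : ℝ))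
            ≤ Real.exp (-l) * (Real.exp l * (2:ℝ)⁻¹^(s+(c+1))) :=
          mul_le_mul_of_nonneg_left h1 (Real.exp_pos _).le
        have h3 : Real.exp (-l) * (Real.exp l * (2:ℝ)⁻¹^(s+(c+1))) = (2:ℝ)⁻¹^(s+(c+1)) := by
          rw [← mul_assoc, ← Real.exp_add]
          simp
        rw [mul_div_assoc]
        linarith
      have hgs : Summable (fun s : ℕ => (2:ℝ)⁻¹^(s+(c+1))) := by
        have h := (summable_geometric_of_lt_one (by norm_num : (0:ℝ) ≤ 2⁻¹)
          (by norm_num : (2:ℝ)⁻¹ < 1)).mul_left ((2:ℝ)⁻¹^(c+1))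
        refine h.congr ?_
        intro s
        rw [pow_add]
        ring
      have hFabs : Summable (fun s => |F (s + (S+1))|) :=
        Summable.of_nonneg_of_le (fun s => abs_nonneg _) htb hgs
      have htail : |∑' s, F (s + (S+1))| ≤ (2:ℝ)⁻¹^c := by
        have hstep1 : |∑' s, F (s + (S+1))| ≤ ∑' s, |F (s + (S+1))| := by
          have := norm_tsum_le_tsum_norm (f := fun s => F (s + (S+1))) (by simpa [Real.norm_eq_abs] using hFabs)
          simpa [Real.norm_eq_abs] using this
        have hstep2 : ∑' s, |F (s + (S+1))| ≤ ∑' s : ℕ, (2:ℝ)⁻¹^(s+(c+1)) :=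
          Summable.tsum_le_tsum htb hFabs hgs
        have hstep3 : ∑' s : ℕ, (2:ℝ)⁻¹^(s+(c+1)) = (2:ℝ)⁻¹^c := by
          have he : (fun s : ℕ => (2:ℝ)⁻¹^(s+(c+1))) = (fun s : ℕ => (2:ℝ)⁻¹^(c+1) * (2:ℝ)⁻¹^s) := by
            funext s; rw [pow_add]; ring
          rw [he, tsum_mul_left, tsum_geometric_of_lt_one (by norm_num) (by norm_num), pow_succ]
          ring
        linarith
      have hcb : (2:ℝ)⁻¹^c ≤ δ/2 := by
        have hceil : 2*L ≤ ((⌈2*L⌉₊:ℕ):ℝ) := Nat.le_ceil _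
        have hhalfe : (2:ℝ)⁻¹ = Real.exp (-(Real.log 2)) := by
          rw [Real.exp_neg, Real.exp_log (by norm_num : (0:ℝ) < 2)]
        have hchain : (2:ℝ)⁻¹^c = Real.exp ((c:ℝ) * (-(Real.log 2))) := by
          rw [hhalfe, ← Real.exp_nat_mul]
        have hineq : (c:ℝ) * (-(Real.log 2)) ≤ -L - Real.log 2 := by
          have hc' : 2*L + 2 ≤ (c:ℝ) := by
            rw [hcdef]
            push_cast
            linarith
          nlinarith
        have hδ2 : Real.exp (-L - Real.log 2) = δ/2 := by
          rw [Real.exp_sub, hδL, Real.exp_log (by norm_num : (0:ℝ) < 2)]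
        rw [hchain, ← hδ2]
        exact Real.exp_le_exp.mpr hineq
      -- per-term Chernoff bound
      set K : ℝ := 2 * Real.exp (-(d:ℝ)^2/(2*(S:ℝ))) with hK
      have hK0 : 0 ≤ K := by positivity
      have hchern : ∀ s ∈ Finset.range (S+1),
          |F s - (coeffc s * (2:ℝ)⁻¹^s) * ∑ k ∈ good s, (s.choose k:ℝ) * Real.cos (((s:ℝ) - 2*(k:ℝ))*θ)|
            ≤ |coeffc s| * K := by
        intro s hs
        have hss : s ≤ S := Nat.lt_succ_iff.mp (Finset.mem_range.mp hs)
        have hid := cos_pow θ s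
        rw [hcos] at hid
        have hsplit2 := Finset.sum_filter_add_sum_filter_not (Finset.range (s+1))
            (fun k : ℕ => ((s:ℤ) - 2*(k:ℤ)).natAbs ≤ d)
            (fun k => (s.choose k:ℝ) * Real.cos (((s:ℝ) - 2*(k:ℝ))*θ))
        have hpow1 : (2:ℝ)⁻¹^s * 2^s = 1 := by
          rw [← mul_pow]; norm_num
        have hFs : F s = (coeffc s * (2:ℝ)⁻¹^s) *
            ∑ k ∈ Finset.range (s+1), (s.choose k:ℝ) * Real.cos (((s:ℝ) - 2*(k:ℝ))*θ) := by
          rw [hF]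
          simp only
          rw [← hid]
          calc coeffc s * y^s = coeffc s * (((2:ℝ)⁻¹^s * 2^s) * y^s) := by rw [hpow1]; ring
            _ = (coeffc s * (2:ℝ)⁻¹^s) * (2^s * y^s) := by ring
        have hkey2 : F s - (coeffc s * (2:ℝ)⁻¹^s) * ∑ k ∈ good s, (s.choose k:ℝ) * Real.cos (((s:ℝ) - 2*(k:ℝ))*θ)
            = (coeffc s * (2:ℝ)⁻¹^s) * ∑ k ∈ (Finset.range (s+1)).filter
                (fun k : ℕ => ¬ ((s:ℤ) - 2*(k:ℤ)).natAbs ≤ d),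
                (s.choose k:ℝ) * Real.cos (((s:ℝ) - 2*(k:ℝ))*θ) := by
          rw [hFs, hgood, ← hsplit2]
          ring
        rw [hkey2, abs_mul]
        have hbad : ∑ k ∈ (Finset.range (s+1)).filter (fun k : ℕ => ¬ ((s:ℤ) - 2*(k:ℤ)).natAbs ≤ d),
            (s.choose k:ℝ) ≤ 2^s * K := by
          have hfe : (Finset.range (s+1)).filter (fun k : ℕ => ¬ ((s:ℤ) - 2*(k:ℤ)).natAbs ≤ d)
              = (Finset.range (s+1)).filter (fun k : ℕ => d < ((s:ℤ) - 2*(k:ℤ)).natAbs) := by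
            apply Finset.filter_congr
            intro k _
            simp [not_le]
          rw [hfe, hK]
          exact chernoff s S d hss hSpos
        have habs2 : |∑ k ∈ (Finset.range (s+1)).filter (fun k : ℕ => ¬ ((s:ℤ) - 2*(k:ℤ)).natAbs ≤ d),
            (s.choose k:ℝ) * Real.cos (((s:ℝ) - 2*(k:ℝ))*θ)|
            ≤ ∑ k ∈ (Finset.range (s+1)).filter (fun k : ℕ => ¬ ((s:ℤ) - 2*(k:ℤ)).natAbs ≤ d),
              (s.choose k:ℝ) := by
          refine (Finset.abs_sum_le_sum_abs _ _).trans (Finset.sum_le_sum ?_)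
          intro k _
          rw [abs_mul, Nat.abs_cast]
          have := Real.abs_cos_le_one ((((s:ℝ) - 2*(k:ℝ)))*θ)
          have hnn : (0:ℝ) ≤ (s.choose k : ℝ) := by positivity
          nlinarith
        have hsplitabs : |coeffc s * (2:ℝ)⁻¹^s| = |coeffc s| * (2:ℝ)⁻¹^s := by
          rw [abs_mul, abs_of_pos (by positivity : (0:ℝ) < (2:ℝ)⁻¹^s)]
        rw [hsplitabs]
        calc |coeffc s| * (2:ℝ)⁻¹^s * |∑ k ∈ (Finset.range (s+1)).filter
              (fun k : ℕ => ¬ ((s:ℤ) - 2*(k:ℤ)).natAbs ≤ d),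
              (s.choose k:ℝ) * Real.cos (((s:ℝ) - 2*(k:ℝ))*θ)|
            ≤ |coeffc s| * (2:ℝ)⁻¹^s * (2^s * K) := by
              apply mul_le_mul_of_nonneg_left (habs2.trans hbad) (by positivity)
          _ = |coeffc s| * (((2:ℝ)⁻¹^s * 2^s) * K) := by ring
          _ = |coeffc s| * K := by rw [hpow1, one_mul]
      -- sum of coefficient magnitudes
      have hcsum : ∑ s ∈ Finset.range (S+1), |coeffc s| ≤ 1 := by
        have habseq : ∀ s : ℕ, |coeffc s| = Real.exp (-l) * (l^s/(Nat.factorial s : ℝ)) := by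
          intro s
          rw [hcoeffc]
          simp only
          rw [abs_div, abs_mul, abs_of_pos (Real.exp_pos _), abs_pow, abs_neg,
            abs_of_nonneg hl0, Nat.abs_cast, mul_div_assoc]
        calc ∑ s ∈ Finset.range (S+1), |coeffc s|
            = Real.exp (-l) * ∑ s ∈ Finset.range (S+1), l^s/(Nat.factorial s : ℝ) := by
              rw [Finset.mul_sum]
              exact Finset.sum_congr rfl (fun s _ => habseq s)
          _ ≤ Real.exp (-l) * Real.exp l := by
              apply mul_le_mul_of_nonneg_left (Real.sum_le_exp_of_nonneg hl0 _) (Real.exp_pos _).le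
          _ = 1 := by rw [← Real.exp_add]; simp
      -- final assembly
      have hKd : K ≤ δ/2 := by
        have he1 : Real.exp (-(d:ℝ)^2/(2*(S:ℝ))) ≤ Real.exp (-(L+2)) := by
          apply Real.exp_le_exp.mpr
          have : -(d:ℝ)^2/(2*(S:ℝ)) = -((d:ℝ)^2/(2*(S:ℝ))) := by ring
          rw [this]
          linarith
        have he2 : Real.exp (-(L+2)) = δ * Real.exp (-2) := by
          rw [show -(L+2) = -L + -2 by ring, Real.exp_add, hδL]
        have he3 : Real.exp (-2:ℝ) ≤ 1/4 := by
          have hinv : Real.exp (-2:ℝ) = (Real.exp 2)⁻¹ := Real.exp_neg 2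
          have h4 : (4:ℝ) ≤ Real.exp 2 := by
            have := Real.exp_one_gt_d9
            rw [show (2:ℝ) = 1+1 by norm_num, Real.exp_add]
            nlinarith
          rw [hinv]
          rw [inv_le_comm₀ (by positivity) (by norm_num)]
          linarith
        rw [hK]
        calc 2 * Real.exp (-(d:ℝ)^2/(2*(S:ℝ))) ≤ 2 * (δ * Real.exp (-2)) := by
              rw [← he2]; linarith
          _ ≤ 2 * (δ * (1/4)) := by nlinarith
          _ ≤ δ/2 := by linarith
      rw [hsplit, heval]
      have hre : (∑ s ∈ Finset.range (S+1), F s) + (∑' s, F (s + (S+1)))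
          - ∑ s ∈ Finset.range (S+1), (coeffc s * (2:ℝ)⁻¹^s) *
              ∑ k ∈ good s, (s.choose k:ℝ) * Real.cos (((s:ℝ) - 2*(k:ℝ))*θ)
          = (∑ s ∈ Finset.range (S+1), (F s - (coeffc s * (2:ℝ)⁻¹^s) *
              ∑ k ∈ good s, (s.choose k:ℝ) * Real.cos (((s:ℝ) - 2*(k:ℝ))*θ)))
            + (∑' s, F (s + (S+1))) := by
        rw [Finset.sum_sub_distrib]
        ring
      rw [hre]
      calc |(∑ s ∈ Finset.range (S+1), (F s - (coeffc s * (2:ℝ)⁻¹^s) *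
              ∑ k ∈ good s, (s.choose k:ℝ) * Real.cos (((s:ℝ) - 2*(k:ℝ))*θ)))
            + (∑' s, F (s + (S+1)))|
          ≤ |∑ s ∈ Finset.range (S+1), (F s - (coeffc s * (2:ℝ)⁻¹^s) *
              ∑ k ∈ good s, (s.choose k:ℝ) * Real.cos (((s:ℝ) - 2*(k:ℝ))*θ))|
            + |∑' s, F (s + (S+1))| := abs_add_le _ _
        _ ≤ (∑ s ∈ Finset.range (S+1), |coeffc s| * K) + (2:ℝ)⁻¹^c := by
            have h1 := (Finset.abs_sum_le_sum_abs (fun s => F s - (coeffc s * (2:ℝ)⁻¹^s) *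
              ∑ k ∈ good s, (s.choose k:ℝ) * Real.cos (((s:ℝ) - 2*(k:ℝ))*θ)) (Finset.range (S+1)))
            have h2 := Finset.sum_le_sum hchern
            linarith [htail]
        _ ≤ 1 * K + δ/2 := by
            have h3 : ∑ s ∈ Finset.range (S+1), |coeffc s| * K
                = (∑ s ∈ Finset.range (S+1), |coeffc s|) * K := by
              rw [Finset.sum_mul]
            rw [h3]
            have := mul_le_mul_of_nonneg_right hcsum hK0
            linarith [hcb]
        _ ≤ δ/2 + δ/2 := by rw [one_mul]; linarith [hKd]
        _ = δ := by ring
end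

section
/- Let M be an n×n real symmetric matrix with operator norm ‖M‖ ≤ 1 (operator norm induced by the Euclidean norm on ℝⁿ). Then for every positive integer s and every δ > 0, setting d := ⌈√(2s·log(2/δ))⌉, there exists a real polynomial p of degree at most d such that ‖M^s − p(M)‖ ≤ δ, where p(M) denotes evaluation of the polynomial p at the matrix M. -/
open Polynomial Polynomial.Chebyshev Finset Matrix
open scoped Matrix.Norms.L2Operator
open Polynomial Polynomial.Chebyshev Finset

lemma Tcongr {a b : ℤ} (h : a = b) : T ℝ a = T ℝ b := by rw [h]

lemma two_X_mul_T (m : ℤ) : 2 * X * T ℝ m = T ℝ (m + 1) + T ℝ (m - 1) := by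
  have h := Polynomial.Chebyshev.T_mul_T ℝ m 1
  rw [T_one] at h
  linear_combination h

lemma cheb_expand (s : ℕ) :
    (X : ℝ[X]) ^ s * 2 ^ s =
      ∑ j ∈ Finset.range (s + 1), (s.choose j : ℝ[X]) * T ℝ ((s : ℤ) - 2 * j) := by
  induction s with
  | zero => simp
  | succ s ih =>
    have step : (X : ℝ[X]) ^ (s+1) * 2 ^ (s+1)
        = ∑ j ∈ Finset.range (s + 1), (s.choose j : ℝ[X]) *
            (T ℝ ((s : ℤ) - 2 * j + 1) + T ℝ ((s : ℤ) - 2 * j - 1)) := by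
      rw [pow_succ, pow_succ, show (X:ℝ[X])^s * X * (2^s*2) = (X^s*2^s) * (2*X) by ring, ih,
        Finset.sum_mul]
      refine Finset.sum_congr rfl fun j hj => ?_
      rw [mul_assoc, mul_comm (T ℝ _) (2*X), two_X_mul_T]
    have e1 : ∑ j ∈ Finset.range (s + 1), (s.choose j : ℝ[X]) * T ℝ ((s : ℤ) - 2 * j + 1)
        = T ℝ ((s:ℤ)+1) + ∑ j ∈ Finset.range s, (s.choose (j+1) : ℝ[X]) * T ℝ ((s : ℤ) - 1 - 2 * j) := by
      rw [Finset.sum_range_succ' (fun j => (s.choose j : ℝ[X]) * T ℝ ((s : ℤ) - 2 * j + 1)) s]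
      rw [Finset.sum_congr rfl (fun j (hj : j ∈ Finset.range s) =>
        congrArg ((s.choose (j+1) : ℝ[X]) * ·) (Tcongr (by push_cast; ring :
          (s : ℤ) - 2 * ((j+1 : ℕ) : ℤ) + 1 = (s : ℤ) - 1 - 2 * j)))]
      rw [show ((s.choose 0 : ℕ) : ℝ[X]) * T ℝ ((s : ℤ) - 2 * ((0:ℕ) : ℤ) + 1) = T ℝ ((s:ℤ)+1) by
        rw [Tcongr (by push_cast; ring : (s : ℤ) - 2 * ((0:ℕ) : ℤ) + 1 = (s:ℤ)+1)]; simp]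
      rw [add_comm]
    have e4 : ∑ j ∈ Finset.range (s + 1), (s.choose j : ℝ[X]) * T ℝ ((s : ℤ) - 2 * j - 1)
        = ∑ j ∈ Finset.range (s + 1), (s.choose j : ℝ[X]) * T ℝ ((s : ℤ) - 1 - 2 * j) :=
      Finset.sum_congr rfl fun j hj =>
        congrArg ((s.choose j : ℝ[X]) * ·) (Tcongr (by ring))
    have e2 : ∑ j ∈ Finset.range (s + 1 + 1), (((s+1).choose j : ℕ) : ℝ[X]) * T ℝ (((s+1 : ℕ) : ℤ) - 2 * j)
        = T ℝ ((s:ℤ)+1) + (∑ j ∈ Finset.range (s+1), (s.choose j : ℝ[X]) * T ℝ ((s : ℤ) - 1 - 2 * j)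
          + ∑ j ∈ Finset.range (s+1), (s.choose (j+1) : ℝ[X]) * T ℝ ((s : ℤ) - 1 - 2 * j)) := by
      rw [Finset.sum_range_succ' (fun j => (((s+1).choose j : ℕ) : ℝ[X]) * T ℝ (((s+1 : ℕ) : ℤ) - 2 * j)) (s+1)]
      rw [Finset.sum_congr rfl (fun j (hj : j ∈ Finset.range (s+1)) => by
        rw [Tcongr (by push_cast; ring :
          ((s+1 : ℕ) : ℤ) - 2 * ((j+1 : ℕ) : ℤ) = (s : ℤ) - 1 - 2 * j),
          Nat.choose_succ_succ', Nat.cast_add, add_mul])]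
      rw [show (((s+1).choose 0 : ℕ) : ℝ[X]) * T ℝ (((s+1 : ℕ) : ℤ) - 2 * ((0:ℕ) : ℤ)) = T ℝ ((s:ℤ)+1) by
        rw [Tcongr (by push_cast; ring : ((s+1 : ℕ) : ℤ) - 2 * ((0:ℕ) : ℤ) = (s:ℤ)+1)]; simp]
      rw [Finset.sum_add_distrib, add_comm]
    have e3 : ∑ j ∈ Finset.range (s+1), (s.choose (j+1) : ℝ[X]) * T ℝ ((s : ℤ) - 1 - 2 * j)
        = ∑ j ∈ Finset.range s, (s.choose (j+1) : ℝ[X]) * T ℝ ((s : ℤ) - 1 - 2 * j) := by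
      rw [Finset.sum_range_succ, Nat.choose_succ_self]
      simp
    rw [step]
    simp only [mul_add]
    rw [Finset.sum_add_distrib, e1, e4, e2, e3]
    ring

lemma binom_exp (s : ℕ) (u : ℝ) :
    ∑ j ∈ Finset.range (s+1), (s.choose j : ℝ) * Real.exp (u * ((s:ℝ) - 2*j))
      = (Real.exp (-u) + Real.exp u) ^ s := by
  rw [add_pow]
  refine Finset.sum_congr rfl fun j hj => ?_
  have hjs : j ≤ s := Nat.lt_succ_iff.mp (Finset.mem_range.mp hj)
  rw [← Real.exp_nat_mul, ← Real.exp_nat_mul, ← Real.exp_add, mul_comm]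
  congr 1
  push_cast [Nat.cast_sub hjs]
  ring

lemma tail_bound (s : ℕ) (hs : 0 < s) (δ : ℝ) (hδ : 0 < δ) (d : ℤ)
    (hd : d = ⌈Real.sqrt (2 * s * Real.log (2 / δ))⌉) :
    ∑ j ∈ (Finset.range (s+1)).filter (fun j : ℕ => ¬ |(s:ℤ) - 2 * (j:ℤ)| ≤ d),
      ((s.choose j : ℝ) / 2 ^ s) ≤ δ := by
  classical
  by_cases hδ2 : 2 ≤ δ
  · calc ∑ j ∈ (Finset.range (s+1)).filter (fun j : ℕ => ¬ |(s:ℤ) - 2 * (j:ℤ)| ≤ d),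
          ((s.choose j : ℝ) / 2 ^ s)
        ≤ ∑ j ∈ Finset.range (s+1), ((s.choose j : ℝ) / 2 ^ s) := by
          apply Finset.sum_le_sum_of_subset_of_nonneg (Finset.filter_subset _ _)
          intro i _ _
          positivity
      _ = (∑ j ∈ Finset.range (s+1), (s.choose j : ℝ)) / 2 ^ s := by
          rw [Finset.sum_div]
      _ = 1 := by
          rw [← Nat.cast_sum, Nat.sum_range_choose]
          push_cast
          field_simp
      _ ≤ δ := by linarith
  · push_neg at hδ2
    have h2δ : (1:ℝ) < 2 / δ := (one_lt_div hδ).mpr hδ2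
    set L := Real.log (2 / δ) with hLdef
    have hL : 0 < L := Real.log_pos h2δ
    have hr0 : 0 ≤ Real.sqrt (2 * s * L) := Real.sqrt_nonneg _
    have hdr : Real.sqrt (2 * s * L) ≤ (d : ℝ) := by
      rw [hd]; exact Int.le_ceil _
    have hd0 : (0:ℝ) ≤ (d:ℝ) := le_trans hr0 hdr
    have hsR : (0:ℝ) < s := by exact_mod_cast hs
    set t : ℝ := (d : ℝ) / s with htdef
    have ht0 : 0 ≤ t := div_nonneg hd0 hsR.le
    set B := (Finset.range (s+1)).filter (fun j : ℕ => ¬ |(s:ℤ) - 2 * (j:ℤ)| ≤ d) with hB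
    -- pointwise bound on bad set
    have key : ∀ j ∈ B, (s.choose j : ℝ) ≤ Real.exp (-(t * d)) *
          ((s.choose j : ℝ) * (Real.exp (t * ((s:ℝ) - 2*j)) + Real.exp ((-t) * ((s:ℝ) - 2*j)))) := by
      intro j hj
      rw [hB, Finset.mem_filter] at hj
      have hbad : (d:ℝ) < |(s:ℝ) - 2*j| := by
        have h' := hj.2
        push_neg at h'
        have h'' : (d:ℝ) < ((|(s:ℤ) - 2*j| : ℤ) : ℝ) := by exact_mod_cast h'
        calc (d:ℝ) < ((|(s:ℤ) - 2*j| : ℤ) : ℝ) := h''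
          _ = |(s:ℝ) - 2*j| := by push_cast; ring_nf
      have h1 : Real.exp (t * d) ≤ Real.exp (t * |(s:ℝ) - 2*j|) :=
        Real.exp_le_exp.mpr (by nlinarith)
      have h2 : Real.exp (t * |(s:ℝ) - 2*j|) ≤
          Real.exp (t * ((s:ℝ) - 2*j)) + Real.exp ((-t) * ((s:ℝ) - 2*j)) := by
        rcases abs_cases ((s:ℝ) - 2*j) with ⟨h, _⟩ | ⟨h, _⟩
        · rw [h]; nlinarith [Real.exp_pos ((-t) * ((s:ℝ) - 2*j))]
        · rw [h]
          have : t * -((s:ℝ) - 2*j) = (-t) * ((s:ℝ) - 2*j) := by ring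
          rw [this]
          nlinarith [Real.exp_pos (t * ((s:ℝ) - 2*j))]
      have hc0 : (0:ℝ) ≤ (s.choose j : ℝ) := Nat.cast_nonneg _
      have hid : (s.choose j : ℝ) = Real.exp (-(t*d)) * ((s.choose j:ℝ) * Real.exp (t*d)) := by
        rw [Real.exp_neg]
        field_simp
      calc (s.choose j : ℝ) = Real.exp (-(t*d)) * ((s.choose j:ℝ) * Real.exp (t*d)) := hid
        _ ≤ Real.exp (-(t * d)) *
            ((s.choose j : ℝ) * (Real.exp (t * ((s:ℝ) - 2*j)) + Real.exp ((-t) * ((s:ℝ) - 2*j)))) :=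
          mul_le_mul_of_nonneg_left
            (mul_le_mul_of_nonneg_left (le_trans h1 h2) hc0) (Real.exp_pos _).le
    have sum1 : ∑ j ∈ B, (s.choose j : ℝ)
        ≤ Real.exp (-(t * d)) * (2 * (Real.exp (-t) + Real.exp t) ^ s) := by
      calc ∑ j ∈ B, (s.choose j : ℝ)
          ≤ ∑ j ∈ B, Real.exp (-(t * d)) *
              ((s.choose j : ℝ) * (Real.exp (t * ((s:ℝ) - 2*j)) + Real.exp ((-t) * ((s:ℝ) - 2*j)))) :=
            Finset.sum_le_sum key
        _ ≤ ∑ j ∈ Finset.range (s+1), Real.exp (-(t * d)) *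
              ((s.choose j : ℝ) * (Real.exp (t * ((s:ℝ) - 2*j)) + Real.exp ((-t) * ((s:ℝ) - 2*j)))) := by
            apply Finset.sum_le_sum_of_subset_of_nonneg (by rw [hB]; exact Finset.filter_subset _ _)
            intro i _ _
            positivity
        _ = Real.exp (-(t * d)) * (∑ j ∈ Finset.range (s+1),
              (s.choose j : ℝ) * Real.exp (t * ((s:ℝ) - 2*j))
            + ∑ j ∈ Finset.range (s+1), (s.choose j : ℝ) * Real.exp ((-t) * ((s:ℝ) - 2*j))) := by
            rw [← Finset.mul_sum, ← Finset.sum_add_distrib]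
            congr 1
            exact Finset.sum_congr rfl fun j hj => by ring
        _ = Real.exp (-(t * d)) * (2 * (Real.exp (-t) + Real.exp t) ^ s) := by
            rw [binom_exp s t, binom_exp s (-t), neg_neg]
            ring
    have main : ∑ j ∈ B, ((s.choose j : ℝ) / 2 ^ s)
        ≤ 2 * Real.exp (-(t * d)) * Real.cosh t ^ s := by
      rw [← Finset.sum_div]
      rw [div_le_iff₀ (by positivity)]
      calc ∑ j ∈ B, (s.choose j : ℝ)
          ≤ Real.exp (-(t * d)) * (2 * (Real.exp (-t) + Real.exp t) ^ s) := sum1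
        _ = 2 * Real.exp (-(t * d)) * Real.cosh t ^ s * 2 ^ s := by
            rw [Real.cosh_eq]
            rw [div_pow]
            field_simp
            ring
    have cosh_pow : Real.cosh t ^ s ≤ Real.exp (s * (t^2/2)) := by
      rw [Real.exp_nat_mul]
      exact pow_le_pow_left₀ ((Real.cosh_pos t).le) (Real.cosh_le_exp_half_sq t) s
    have exp_combine : -(t * d) + s * (t^2/2) = -((d:ℝ)^2/(2*s)) := by
      rw [htdef]
      field_simp
      ring
    have final1 : 2 * Real.exp (-(t * d)) * Real.cosh t ^ s
        ≤ 2 * Real.exp (-((d:ℝ)^2/(2*s))) := by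
      calc 2 * Real.exp (-(t * d)) * Real.cosh t ^ s
          ≤ 2 * Real.exp (-(t * d)) * Real.exp (s * (t^2/2)) := by
            apply mul_le_mul_of_nonneg_left cosh_pow (by positivity)
        _ = 2 * Real.exp (-(t * d) + s * (t^2/2)) := by rw [Real.exp_add]; ring
        _ = 2 * Real.exp (-((d:ℝ)^2/(2*s))) := by rw [exp_combine]
    have hd2 : 2 * s * L ≤ (d:ℝ)^2 := by
      nlinarith [Real.sq_sqrt (show (0:ℝ) ≤ 2 * s * L by positivity), hdr, hr0]
    have hmono : Real.exp (-((d:ℝ)^2/(2*s))) ≤ Real.exp (-L) := by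
      apply Real.exp_le_exp.mpr
      rw [neg_le_neg_iff, le_div_iff₀ (by positivity)]
      linarith
    have hexpL : Real.exp (-L) = δ / 2 := by
      rw [Real.exp_neg, hLdef, Real.exp_log (by positivity)]
      rw [inv_div]
    calc ∑ j ∈ B, ((s.choose j : ℝ) / 2 ^ s)
        ≤ 2 * Real.exp (-(t * d)) * Real.cosh t ^ s := main
      _ ≤ 2 * Real.exp (-((d:ℝ)^2/(2*s))) := final1
      _ ≤ 2 * Real.exp (-L) := by linarith [hmono]
      _ = δ := by rw [hexpL]; ring

variable {n : ℕ}

-- norm of identity matrix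
lemma norm_one_le_one (n : ℕ) : ‖(1 : Matrix (Fin n) (Fin n) ℝ)‖ ≤ 1 := by
  rw [Matrix.cstar_norm_def, _root_.map_one]
  exact ContinuousLinearMap.norm_id_le

lemma norm_unitary_le (U : Matrix (Fin n) (Fin n) ℝ) (hU : star U * U = 1) : ‖U‖ ≤ 1 := by
  have h := CStarRing.norm_star_mul_self (x := U)
  rw [hU] at h
  nlinarith [norm_nonneg U, norm_one_le_one n]

lemma diag_norm_le (v : Fin n → ℝ) (c : ℝ) (hc : 0 ≤ c) (h : ∀ i, |v i| ≤ c) :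
    ‖(Matrix.diagonal v : Matrix (Fin n) (Fin n) ℝ)‖ ≤ c := by
  rw [Matrix.cstar_norm_def]
  refine ContinuousLinearMap.opNorm_le_bound _ hc fun x => ?_
  have hx : ∀ i, (Matrix.toEuclideanCLM (𝕜 := ℝ) (Matrix.diagonal v) x) i = v i * x i := by
    intro i
    have := Matrix.ofLp_toEuclideanCLM (𝕜 := ℝ) (Matrix.diagonal v) x
    have h2 := congrFun this i
    simpa [Matrix.toLin'_apply, Matrix.mulVec_diagonal] using h2
  rw [EuclideanSpace.norm_eq, EuclideanSpace.norm_eq]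
  rw [show c * Real.sqrt (∑ i, ‖x i‖^2) = Real.sqrt (c^2 * ∑ i, ‖x i‖^2) by
    rw [Real.sqrt_mul (by positivity), Real.sqrt_sq hc]]
  apply Real.sqrt_le_sqrt
  rw [Finset.mul_sum]
  apply Finset.sum_le_sum
  intro i _
  rw [hx i]
  have := h i
  rw [Real.norm_eq_abs, Real.norm_eq_abs, abs_mul]
  have hxi : (0:ℝ) ≤ |x i| := abs_nonneg _
  have h1 : |v i| * |x i| ≤ c * |x i| := mul_le_mul_of_nonneg_right this hxi
  have h2 : (0:ℝ) ≤ c * |x i| := by positivity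
  calc (|v i| * |x i|)^2 ≤ (c * |x i|)^2 := by nlinarith [mul_nonneg (abs_nonneg (v i)) hxi]
    _ = c^2 * |x i|^2 := by ring

lemma matConjPow (U D : Matrix (Fin n) (Fin n) ℝ) (h1 : star U * U = 1) (h2 : U * star U = 1)
    (k : ℕ) : (U * D * star U) ^ k = U * D ^ k * star U := by
  induction k with
  | zero => simp [h2]
  | succ k ih =>
    rw [pow_succ, ih, pow_succ]
    calc U * D ^ k * star U * (U * D * star U)
        = U * D ^ k * (star U * U) * D * star U := by
          simp only [Matrix.mul_assoc]
      _ = U * (D ^ k * D) * star U := by rw [h1]; simp only [Matrix.mul_assoc, Matrix.mul_one]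
      _ = _ := by simp only [Matrix.mul_assoc]

lemma conj_aeval (U D : Matrix (Fin n) (Fin n) ℝ) (h1 : star U * U = 1) (h2 : U * star U = 1)
    (q : ℝ[X]) : aeval (U * D * star U) q = U * aeval D q * star U := by
  induction q using Polynomial.induction_on' with
  | add p q hp hq => rw [map_add, hp, hq, map_add, Matrix.mul_add, Matrix.add_mul]
  | monomial k a =>
    rw [aeval_monomial, aeval_monomial, matConjPow U D h1 h2, ← Algebra.smul_def,
      ← Algebra.smul_def, Matrix.mul_smul, Matrix.smul_mul]

lemma aeval_diagonal (v : Fin n → ℝ) (q : ℝ[X]) :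
    aeval (Matrix.diagonal v) q = Matrix.diagonal (fun i => q.eval (v i)) := by
  have h : Matrix.diagonal v = Matrix.diagonalAlgHom (R := ℝ) v := rfl
  rw [h, aeval_algHom_apply]
  show Matrix.diagonal (aeval v q) = _
  refine congrArg Matrix.diagonal (funext fun i => ?_)
  have := aeval_algHom_apply (Pi.evalAlgHom ℝ (fun _ : Fin n => ℝ) i) v q
  simp only [Pi.evalAlgHom_apply] at this
  rw [← this, Polynomial.coe_aeval_eq_eval]

lemma aeval_hermitian (M : Matrix (Fin n) (Fin n) ℝ) (hH : M.IsHermitian) (q : ℝ[X]) :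
    aeval M q = (hH.eigenvectorUnitary : Matrix (Fin n) (Fin n) ℝ) *
        Matrix.diagonal (fun i => q.eval (hH.eigenvalues i)) *
        star (hH.eigenvectorUnitary : Matrix (Fin n) (Fin n) ℝ) := by
  set U := (hH.eigenvectorUnitary : Matrix (Fin n) (Fin n) ℝ) with hU
  have h1 : star U * U = 1 := Unitary.coe_star_mul_self hH.eigenvectorUnitary
  have h2 : U * star U = 1 := Unitary.coe_mul_star_self hH.eigenvectorUnitary
  have hspec : M = U * Matrix.diagonal hH.eigenvalues * star U := by
    have := hH.spectral_theorem
    simpa using this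
  conv_lhs => rw [hspec]
  rw [conj_aeval U _ h1 h2, aeval_diagonal]

lemma natDegree_T_le_s16 (m : ℕ) : (T ℝ (m : ℤ)).natDegree ≤ m := by
  induction m using Nat.strong_induction_on with
  | _ m ih =>
    match m with
    | 0 => simp
    | 1 => simpa using Polynomial.natDegree_X_le
    | (k+2) =>
      have h : ((k+2 : ℕ) : ℤ) = (k : ℤ) + 2 := by push_cast; ring
      rw [h, T_add_two]
      refine le_trans (Polynomial.natDegree_sub_le _ _) (max_le ?_ ?_)
      · refine le_trans (Polynomial.natDegree_mul_le) ?_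
        have hx : (2 * X : ℝ[X]).natDegree ≤ 1 :=
          le_trans Polynomial.natDegree_mul_le (by simpa using Polynomial.natDegree_X_le)
        have h1 : ((k:ℤ)+1) = ((k+1:ℕ):ℤ) := by push_cast; ring
        rw [h1]
        have := ih (k+1) (by omega)
        omega
      · exact le_trans (ih k (by omega)) (by omega)

lemma natDegree_T_int (k : ℤ) : (T ℝ k).natDegree ≤ k.natAbs := by
  rcases Int.natAbs_eq k with h | h
  · conv_lhs => rw [h]
    exact natDegree_T_le_s16 _
  · conv_lhs => rw [h, T_neg]
    exact natDegree_T_le_s16 _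

lemma abs_T_eval_le (k : ℤ) (x : ℝ) (h1 : -1 ≤ x) (h2 : x ≤ 1) : |(T ℝ k).eval x| ≤ 1 := by
  have hx : x = Real.cos (Real.arccos x) := (Real.cos_arccos h1 h2).symm
  rw [hx, Polynomial.Chebyshev.T_real_cos]
  exact Real.abs_cos_le_one _

lemma eig_abs_le {n : ℕ} (M : Matrix (Fin n) (Fin n) ℝ) (hH : M.IsHermitian)
    (hnorm : ‖M‖ ≤ 1) (i : Fin n) : |hH.eigenvalues i| ≤ 1 := by
  have hx : ‖hH.eigenvectorBasis i‖ = 1 := hH.eigenvectorBasis.orthonormal.1 i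
  have hle := Matrix.l2_opNorm_mulVec M (hH.eigenvectorBasis i)
  have hb2 : M *ᵥ (hH.eigenvectorBasis i : EuclideanSpace ℝ (Fin n))
      = hH.eigenvalues i • (hH.eigenvectorBasis i : EuclideanSpace ℝ (Fin n)) :=
    hH.mulVec_eigenvectorBasis i
  have hone : ‖(EuclideanSpace.equiv (Fin n) ℝ).symm
      (hH.eigenvectorBasis i : EuclideanSpace ℝ (Fin n))‖ = 1 := hx
  rw [hb2, _root_.map_smul, norm_smul, Real.norm_eq_abs, hone, hx, mul_one, mul_one] at hle
  exact le_trans hle hnorm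

/-- For a symmetric matrix `M` with spectral norm at most `1`, the power `M^s` is approximated
in spectral norm up to `δ` by `p(M)` for some polynomial `p` of degree at most
`⌈√(2s·log(2/δ))⌉`. -/
theorem matrix_power_poly_approx (n : ℕ) (M : Matrix (Fin n) (Fin n) ℝ) (hM : M.IsSymm)
    (hnorm : ‖Matrix.toEuclideanCLM (𝕜 := ℝ) M‖ ≤ 1) (s : ℕ) (hs : 0 < s)
    (δ : ℝ) (hδ : 0 < δ) :
    ∃ p : Polynomial ℝ,
      (p.natDegree : ℤ) ≤ ⌈Real.sqrt (2 * s * Real.log (2 / δ))⌉ ∧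
      ‖Matrix.toEuclideanCLM (𝕜 := ℝ) (M ^ s - Polynomial.aeval M p)‖ ≤ δ := by
  classical
  have hH : M.IsHermitian := by
    rw [Matrix.IsHermitian, Matrix.conjTranspose]
    rw [hM.eq]; ext i j; simp
  have hnorm' : ‖M‖ ≤ 1 := by rwa [Matrix.cstar_norm_def]
  set d : ℤ := ⌈Real.sqrt (2 * s * Real.log (2 / δ))⌉ with hd
  have hd0 : 0 ≤ d := Int.ceil_nonneg (Real.sqrt_nonneg _)
  set p : ℝ[X] := ∑ j ∈ (Finset.range (s+1)).filter (fun j : ℕ => |(s:ℤ) - 2 * (j:ℤ)| ≤ d),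
      Polynomial.C ((s.choose j : ℝ) / 2 ^ s) * T ℝ ((s : ℤ) - 2 * j) with hp
  refine ⟨p, ?_, ?_⟩
  · -- degree bound
    have hdeg : p.natDegree ≤ d.toNat := by
      rw [hp]
      refine Polynomial.natDegree_sum_le_of_forall_le _ _ fun j hj => ?_
      rw [Finset.mem_filter] at hj
      refine le_trans (Polynomial.natDegree_C_mul_le _ _)
        (le_trans (natDegree_T_int _) ?_)
      have h4 := hj.2
      rw [Int.abs_eq_natAbs] at h4
      omega
    have : (p.natDegree : ℤ) ≤ (d.toNat : ℤ) := by exact_mod_cast hdeg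
    rw [Int.toNat_of_nonneg hd0] at this
    exact this
  · -- norm bound
    have h2s : ((2:ℝ[X]))^s ≠ 0 := pow_ne_zero _ two_ne_zero
    have hXs : (X:ℝ[X])^s = ∑ j ∈ Finset.range (s+1),
        Polynomial.C ((s.choose j : ℝ) / 2 ^ s) * T ℝ ((s : ℤ) - 2 * j) := by
      apply mul_right_cancel₀ h2s
      rw [cheb_expand s, Finset.sum_mul]
      refine Finset.sum_congr rfl fun j hj => ?_
      have hC2 : ((2:ℝ[X]))^s = Polynomial.C ((2:ℝ)^s) := by
        rw [map_pow]; congr 1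
      rw [mul_right_comm, hC2, ← Polynomial.C_mul,
        div_mul_cancel₀ _ (by positivity : ((2:ℝ)^s) ≠ 0), Polynomial.C_eq_natCast]
    have hsplit : (X:ℝ[X])^s - p = ∑ j ∈ (Finset.range (s+1)).filter
        (fun j : ℕ => ¬ |(s:ℤ) - 2 * (j:ℤ)| ≤ d),
        Polynomial.C ((s.choose j : ℝ) / 2 ^ s) * T ℝ ((s : ℤ) - 2 * j) := by
      rw [hXs, hp, ← Finset.sum_filter_add_sum_filter_not (Finset.range (s+1))
        (fun j : ℕ => |(s:ℤ) - 2 * (j:ℤ)| ≤ d)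
        (fun j => Polynomial.C ((s.choose j : ℝ) / 2 ^ s) * T ℝ ((s : ℤ) - 2 * j))]
      ring
    -- scalar estimate
    have hscalar : ∀ x : ℝ, |x| ≤ 1 → |((X:ℝ[X])^s - p).eval x| ≤ δ := by
      intro x hx
      rw [hsplit, Polynomial.eval_finset_sum]
      refine le_trans (Finset.abs_sum_le_sum_abs _ _) ?_
      refine le_trans (Finset.sum_le_sum (fun j hj => ?_)) (tail_bound s hs δ hδ d hd)
      rw [Polynomial.eval_mul, Polynomial.eval_C, abs_mul]
      have h1 : |(T ℝ ((s : ℤ) - 2 * j)).eval x| ≤ 1 :=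
        abs_T_eval_le _ x (by cases abs_le.mp hx; linarith) (by cases abs_le.mp hx; linarith)
      have h2 : (0:ℝ) ≤ (s.choose j : ℝ) / 2 ^ s := by positivity
      calc |(s.choose j : ℝ) / 2 ^ s| * |(T ℝ ((s : ℤ) - 2 * j)).eval x|
          ≤ |(s.choose j : ℝ) / 2 ^ s| * 1 := by
            apply mul_le_mul_of_nonneg_left h1 (abs_nonneg _)
        _ = (s.choose j : ℝ) / 2 ^ s := by rw [mul_one, abs_of_nonneg h2]
    -- matrix norm bound
    have heval : aeval M ((X:ℝ[X])^s - p) = M ^ s - aeval M p := by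
      rw [map_sub, map_pow, aeval_X]
    rw [← Matrix.cstar_norm_def, ← heval, aeval_hermitian M hH]
    set U := (hH.eigenvectorUnitary : Matrix (Fin n) (Fin n) ℝ) with hU
    have h1 : star U * U = 1 := Unitary.coe_star_mul_self hH.eigenvectorUnitary
    have h2 : U * star U = 1 := Unitary.coe_mul_star_self hH.eigenvectorUnitary
    have hUn : ‖U‖ ≤ 1 := norm_unitary_le U h1
    have hUsn : ‖star U‖ ≤ 1 := norm_unitary_le (star U) (by rw [star_star]; exact h2)
    have hDn : ‖Matrix.diagonal (fun i => ((X:ℝ[X])^s - p).eval (hH.eigenvalues i))‖ ≤ δ :=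
      diag_norm_le _ δ hδ.le fun i => hscalar _ (eig_abs_le M hH hnorm' i)
    calc ‖U * Matrix.diagonal (fun i => ((X:ℝ[X])^s - p).eval (hH.eigenvalues i)) * star U‖
        ≤ ‖U * Matrix.diagonal (fun i => ((X:ℝ[X])^s - p).eval (hH.eigenvalues i))‖ * ‖star U‖ :=
          norm_mul_le _ _
      _ ≤ ‖U‖ * ‖Matrix.diagonal (fun i => ((X:ℝ[X])^s - p).eval (hH.eigenvalues i))‖ * ‖star U‖ :=
          mul_le_mul_of_nonneg_right (norm_mul_le _ _) (norm_nonneg _)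
      _ ≤ 1 * δ * 1 := by
          apply mul_le_mul (mul_le_mul hUn hDn (norm_nonneg _) (by linarith)) hUsn
            (norm_nonneg _) (by linarith)
      _ = δ := by ring
end
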